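/- Let A be a real super division algebra with even part ℂ and nonzero odd element e such that e a e⁻¹ = conj(a) for all a ∈ A₀ ≅ ℂ. Then e² is real (i.e., e² lies in ℝ·1 ⊆ A₀), and e can be rescaled by a real number so that e² = 1 or e² = -1. -/

import Mathlib

/-- If A₀ ≅ ℂ and conjugation by the nonzero odd element e acts on A₀ as
complex conjugation, then e² is real, and a real rescaling of e squares to 1 or -1. -/
theorem stmt_10 {A : Type*} [Ring A] [Algebra ℝ A] [FiniteDimensional ℝ A]
    (A₀ : Subalgebra ℝ A) (A₁ : Submodule ℝ A)
    (hcompl : IsCompl (Subalgebra.toSubmodule A₀) A₁)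
    (h01 : ∀ a ∈ A₀, ∀ b ∈ A₁, a * b ∈ A₁)
    (h10 : ∀ a ∈ A₁, ∀ b ∈ A₀, a * b ∈ A₁)
    (h11 : ∀ a ∈ A₁, ∀ b ∈ A₁, a * b ∈ A₀)
    (hdiv : ∀ a : A, (a ∈ A₀ ∨ a ∈ A₁) → a ≠ 0 → IsUnit a)
    (φ : A₀ ≃ₐ[ℝ] ℂ)
    (e : A) (he : e ∈ A₁) (he0 : e ≠ 0)
    (e' : A) (hee' : e * e' = 1) (he'e : e' * e = 1)
    (hconj : ∀ a b : A₀, (b : A) = e * (a : A) * e' → φ b = (starRingEnd ℂ) (φ a)) :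
    (∃ r : ℝ, e * e = algebraMap ℝ A r) ∧
      (∃ t : ℝ, (t • e) * (t • e) = 1 ∨ (t • e) * (t • e) = -1) := by
  have hs : e * e ∈ A₀ := h11 e he e he
  set s : A₀ := ⟨e * e, hs⟩ with hsdef
  have hcomm : (s : A) = e * (s : A) * e' := by
    have : e * (s : A) * e' = (s : A) * (e * e') := by
      show e * (e * e) * e' = (e * e) * (e * e')
      simp only [mul_assoc]
    rw [this, hee', mul_one]
  have hreal : φ s = (starRingEnd ℂ) (φ s) := hconj s s hcomm
  have him : (φ s).im = 0 := by
    have := congrArg Complex.im hreal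
    simp [Complex.conj_im] at this
    linarith
  set r : ℝ := (φ s).re with hrdef
  have hφs : φ s = algebraMap ℝ ℂ r := by
    apply Complex.ext <;> simp [him, hrdef]
  have hsr : s = algebraMap ℝ A₀ r := by
    apply φ.injective
    rw [hφs, AlgEquiv.commutes]
  have hee : e * e = algebraMap ℝ A r := by
    have := congrArg (Subalgebra.val A₀) hsr
    simpa using this
  refine ⟨⟨r, hee⟩, ?_⟩
  have hr0 : r ≠ 0 := by
    intro h
    apply he0
    have hee0 : e * e = 0 := by rw [hee, h, map_zero]
    calc e = e * (e * e') := by rw [hee', mul_one]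
    _ = (e * e) * e' := by rw [mul_assoc]
    _ = 0 := by rw [hee0, zero_mul]
  refine ⟨(Real.sqrt |r|)⁻¹, ?_⟩
  have hsq : ((Real.sqrt |r|)⁻¹ • e) * ((Real.sqrt |r|)⁻¹ • e)
      = algebraMap ℝ A (((Real.sqrt |r|)⁻¹)^2 * r) := by
    rw [smul_mul_smul_comm, hee, map_mul, ← Algebra.smul_def, pow_two]
  have habs : ((Real.sqrt |r|)⁻¹)^2 = |r|⁻¹ := by
    rw [inv_pow, Real.sq_sqrt (abs_nonneg r)]
  rw [hsq, habs]
  rcases lt_or_gt_of_ne hr0 with h | h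
  · right
    have : |r|⁻¹ * r = -1 := by
      rw [abs_of_neg h]
      field_simp
    rw [this]; simp
  · left
    have : |r|⁻¹ * r = 1 := by
      rw [abs_of_pos h]
      field_simp
    rw [this]; simp
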